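/- arXiv:2312.00885 — 2 statements merged into one kernel-verified Lean document; each statement's English description precedes it below -/
import Mathlib

section
/- For every integer k ≥ 2 we have m(k,2;2^{k-2}) = 2^k - 1, i.e., the minimum possible length of a 2^{k-2}-divisible minimal k-dimensional binary linear code is 2^k - 1, attained by the binary simplex code of dimension k. -/
/-- The Hamming weight of a word: the number of nonzero coordinates. -/
noncomputable def wt {ι F : Type*} [Zero F] (c : ι → F) : ℕ := Set.ncard {i | c i ≠ 0}

/-- A linear code (a submodule of `ι → F`) is minimal if the support of every nonzero
codeword is minimal with respect to inclusion among supports of nonzero codewords. -/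
def IsMinimalCode {ι F : Type*} [Semiring F] (C : Submodule F (ι → F)) : Prop :=
  ∀ c ∈ C, c ≠ 0 → ∀ u ∈ C, u ≠ 0 →
    {i | u i ≠ 0} ⊆ {i | c i ≠ 0} → {i | u i ≠ 0} = {i | c i ≠ 0}

/-- `mDiv F k Δ` is the minimum possible length `n` of a `Δ`-divisible minimal `[n,k]` code
over the field `F`; over `F = ZMod 2` this is `m(k,2;Δ)`. -/
noncomputable def mDiv (F : Type*) [Field F] (k Δ : ℕ) : ℕ :=
  sInf {n : ℕ | ∃ C : Submodule F (Fin n → F),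
    Module.finrank F C = k ∧ IsMinimalCode C ∧ ∀ c ∈ C, Δ ∣ wt c}

lemma zmod2_cases : ∀ a : ZMod 2, a = 0 ∨ a = 1 := by decide

lemma zmod2_one_of_ne_zero {a : ZMod 2} (h : a ≠ 0) : a = 1 := by
  rcases zmod2_cases a with h' | h' <;> simp_all

lemma wt_eq_card {n : ℕ} (c : Fin n → ZMod 2) :
    wt c = (Finset.univ.filter (fun i => c i ≠ 0)).card := by
  have h : {i | c i ≠ 0} = ↑(Finset.univ.filter (fun i => c i ≠ 0)) := by
    ext i; simp
  rw [wt, h, Set.ncard_coe_finset]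

lemma half_card {W : Type*} [AddCommGroup W] [Fintype W]
    (ψ : W → ZMod 2) (hadd : ∀ a b, ψ (a + b) = ψ a + ψ b)
    (hne : ∃ w, ψ w ≠ 0) :
    2 * (Finset.univ.filter (fun w => ψ w ≠ 0)).card = Fintype.card W := by
  classical
  obtain ⟨w₁, hw₁⟩ := hne
  have hw₁' : ψ w₁ = 1 := zmod2_one_of_ne_zero hw₁
  have hsub : ∀ a b, ψ (a - b) = ψ a - ψ b := by
    intro a b
    have h := hadd (a - b) b
    rw [sub_add_cancel] at h
    rw [eq_sub_iff_add_eq]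
    exact h.symm
  have key : (Finset.univ.filter (fun w => ψ w ≠ 0)).card
      = (Finset.univ.filter (fun w => ¬ ψ w ≠ 0)).card := by
    apply Finset.card_bij' (fun w _ => w + w₁) (fun w _ => w - w₁)
    · intro a ha
      simp only [Finset.mem_filter, Finset.mem_univ, true_and, not_not] at ha ⊢
      rw [hadd, zmod2_one_of_ne_zero ha, hw₁']
      decide
    · intro a ha
      simp only [Finset.mem_filter, Finset.mem_univ, true_and, not_not] at ha ⊢
      rw [hsub, ha, hw₁']
      decide
    · intro a _; exact add_sub_cancel_right a w₁
    · intro a _; exact sub_add_cancel a w₁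
  have split := Finset.card_filter_add_card_filter_not
    (s := (Finset.univ : Finset W)) (p := fun w => ψ w ≠ 0)
  rw [Finset.card_univ] at split
  omega

lemma simplex_exists (k : ℕ) (hk : 2 ≤ k) :
    ∃ C : Submodule (ZMod 2) (Fin (2 ^ k - 1) → ZMod 2),
      Module.finrank (ZMod 2) C = k ∧ IsMinimalCode C ∧
      ∀ c ∈ C, 2 ^ (k - 2) ∣ wt c := by
  classical
  have hcardV : Fintype.card (Fin k → ZMod 2) = 2 ^ k := by
    simp [Fintype.card_fun]
  have hcardsub : Fintype.card {v : Fin k → ZMod 2 // v ≠ 0} = 2 ^ k - 1 := by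
    have h1 : Fintype.card {v : Fin k → ZMod 2 // v = 0} = 1 := Fintype.card_subtype_eq 0
    have h2 := Fintype.card_subtype_compl (fun v : Fin k → ZMod 2 => v = 0)
    rw [hcardV, h1] at h2
    exact h2
  set e : Fin (2 ^ k - 1) ≃ {v : Fin k → ZMod 2 // v ≠ 0} :=
    (Fintype.equivFinOfCardEq hcardsub).symm with he
  set B : (Fin k → ZMod 2) → (Fin k → ZMod 2) → ZMod 2 :=
    fun v x => ∑ j, v j * x j with hB
  have hBadd_left : ∀ v w x, B (v + w) x = B v x + B w x := by
    intro v w x; simp [hB, add_mul, Finset.sum_add_distrib]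
  have hBadd_right : ∀ v x y, B v (x + y) = B v x + B v y := by
    intro v x y; simp [hB, mul_add, Finset.sum_add_distrib]
  have hB0 : ∀ x, B 0 x = 0 := by intro x; simp [hB]
  have hB0' : ∀ v, B v 0 = 0 := by intro v; simp [hB]
  have hBsingle : ∀ (j : Fin k) (x : Fin k → ZMod 2), B (Pi.single j 1) x = x j := by
    intro j x
    simp [hB, Pi.single_apply, ite_mul]
  set φ : (Fin k → ZMod 2) →ₗ[ZMod 2] (Fin (2 ^ k - 1) → ZMod 2) :=
    { toFun := fun x i => B (e i).1 x
      map_add' := by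
        intro x y; funext i; exact hBadd_right _ _ _
      map_smul' := by
        intro r x
        rcases zmod2_cases r with h | h <;> subst h
        · funext i
          simp [hB0']
        · funext i
          simp } with hφ
  have hφapp : ∀ (x : Fin k → ZMod 2) (i : Fin (2 ^ k - 1)), φ x i = B (e i).1 x := by
    intro x i; rfl
  have hφinj : Function.Injective φ := by
    intro x y hxy
    have hBall : ∀ v : Fin k → ZMod 2, v ≠ 0 → B v x = B v y := by
      intro v hv
      have h := congrFun hxy (e.symm ⟨v, hv⟩)
      rwa [hφapp, hφapp, Equiv.apply_symm_apply] at h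
    funext j
    have hsj : (Pi.single j 1 : Fin k → ZMod 2) ≠ 0 := by
      intro h
      have := congrFun h j
      simp at this
    have := hBall (Pi.single j 1 : Fin k → ZMod 2) hsj
    rwa [hBsingle, hBsingle] at this
  -- weight computation
  have hwtφ : ∀ x : Fin k → ZMod 2, x ≠ 0 → wt (φ x) = 2 ^ (k - 1) := by
    intro x hx
    rw [wt_eq_card]
    have hstep : (Finset.univ.filter (fun i => φ x i ≠ 0)).card
        = (Finset.univ.filter (fun v : Fin k → ZMod 2 => B v x ≠ 0)).card := by
      apply Finset.card_bij (fun i _ => ((e i).1 : Fin k → ZMod 2))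
      · intro i hi
        simp only [Finset.mem_filter, Finset.mem_univ, true_and] at hi ⊢
        rwa [hφapp] at hi
      · intro i₁ h₁ i₂ h₂ h
        exact e.injective (Subtype.ext h)
      · intro v hv
        simp only [Finset.mem_filter, Finset.mem_univ, true_and] at hv
        have hv0 : v ≠ 0 := by
          intro h; subst h; exact hv (hB0 x)
        refine ⟨e.symm ⟨v, hv0⟩, ?_, ?_⟩
        · simp only [Finset.mem_filter, Finset.mem_univ, true_and]
          rw [hφapp, Equiv.apply_symm_apply]
          exact hv
        · rw [Equiv.apply_symm_apply]
    rw [hstep]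
    have h2 : 2 * (Finset.univ.filter (fun v : Fin k → ZMod 2 => B v x ≠ 0)).card = 2 ^ k := by
      rw [half_card (fun v => B v x) (fun a b => hBadd_left a b x) ?_, hcardV]
      obtain ⟨j, hj⟩ : ∃ j, x j ≠ 0 := by
        by_contra h; push_neg at h; exact hx (funext h)
      exact ⟨(Pi.single j 1 : Fin k → ZMod 2), by simpa only [hBsingle] using hj⟩
    have hpow : 2 ^ k = 2 * 2 ^ (k - 1) := by
      rw [← pow_succ']
      congr 1
      omega
    omega
  refine ⟨LinearMap.range φ, ?_, ?_, ?_⟩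
  · rw [LinearMap.finrank_range_of_inj hφinj]
    exact Module.finrank_fin_fun _
  · rintro c hc hc0 u hu hu0 hsubset
    obtain ⟨x, rfl⟩ := LinearMap.mem_range.mp hc
    obtain ⟨y, rfl⟩ := LinearMap.mem_range.mp hu
    have hx : x ≠ 0 := by rintro rfl; rw [map_zero] at hc0; exact hc0 rfl
    have hy : y ≠ 0 := by rintro rfl; rw [map_zero] at hu0; exact hu0 rfl
    have himp : ∀ v : Fin k → ZMod 2, v ≠ 0 → B v y ≠ 0 → B v x ≠ 0 := by
      intro v hv hvy
      have hmem : (e.symm ⟨v, hv⟩ : Fin (2 ^ k - 1)) ∈ {i | φ y i ≠ 0} := by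
        simp only [Set.mem_setOf_eq, hφapp, Equiv.apply_symm_apply]
        exact hvy
      have := hsubset hmem
      simpa only [Set.mem_setOf_eq, hφapp, Equiv.apply_symm_apply] using this
    suffices hxy : x = y by rw [hxy]
    by_contra hne
    obtain ⟨j, hj⟩ : ∃ j, y j ≠ 0 := by
      by_contra h; push_neg at h; exact hy (funext h)
    set v₁ := (Pi.single j 1 : Fin k → ZMod 2) with hv₁def
    have hv₁y : B v₁ y ≠ 0 := by rw [hBsingle]; exact hj
    have hv₁0 : v₁ ≠ 0 := by
      intro h; apply hv₁y; rw [h, hB0]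
    have hv₁x : B v₁ x ≠ 0 := himp v₁ hv₁0 hv₁y
    have hxy0 : x + y ≠ 0 := by
      intro h
      apply hne
      funext j'
      have h' := congrFun h j'
      simp only [Pi.add_apply, Pi.zero_apply] at h'
      have : ∀ a b : ZMod 2, a + b = 0 → a = b := by decide
      exact this _ _ h'
    obtain ⟨j₀, hj₀⟩ : ∃ j₀, (x + y) j₀ ≠ 0 := by
      by_contra h; push_neg at h; exact hxy0 (funext h)
    set v₀ := (Pi.single j₀ 1 : Fin k → ZMod 2) with hv₀def
    have hv₀sum : B v₀ x + B v₀ y ≠ 0 := by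
      rw [← hBadd_right, hBsingle]
      exact hj₀
    rcases zmod2_cases (B v₀ y) with h0 | h1
    · have hv₀x : B v₀ x ≠ 0 := by
        intro h; apply hv₀sum; rw [h, h0, add_zero]
      have hvy : B (v₀ + v₁) y ≠ 0 := by
        rw [hBadd_left, h0, zero_add]; exact hv₁y
      have hvne0 : v₀ + v₁ ≠ 0 := by
        intro h; apply hvy; rw [h, hB0]
      have hvx : B (v₀ + v₁) x ≠ 0 := himp _ hvne0 hvy
      apply hvx
      rw [hBadd_left, zmod2_one_of_ne_zero hv₀x, zmod2_one_of_ne_zero hv₁x]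
      decide
    · have hv₀0 : v₀ ≠ 0 := by
        intro h; rw [h, hB0] at h1; exact one_ne_zero h1.symm
      have hv₀y : B v₀ y ≠ 0 := by rw [h1]; exact one_ne_zero
      have hv₀x : B v₀ x ≠ 0 := himp v₀ hv₀0 hv₀y
      apply hv₀sum
      rw [h1, zmod2_one_of_ne_zero hv₀x]
      decide
  · rintro c hc
    obtain ⟨x, rfl⟩ := LinearMap.mem_range.mp hc
    by_cases hx : x = 0
    · subst hx
      rw [map_zero]
      have h0 : wt (0 : Fin (2 ^ k - 1) → ZMod 2) = 0 := by
        rw [wt_eq_card]; simp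
      rw [h0]
      exact dvd_zero _
    · rw [hwtφ x hx]
      exact pow_dvd_pow 2 (by omega)

set_option maxHeartbeats 2000000 in
lemma lower_bound {k n : ℕ} (hk : 2 ≤ k) (C : Submodule (ZMod 2) (Fin n → ZMod 2))
    (hrank : Module.finrank (ZMod 2) C = k) (hmin : IsMinimalCode C)
    (hdiv : ∀ c ∈ C, 2 ^ (k - 2) ∣ wt c) : 2 ^ k - 1 ≤ n := by
  classical
  haveI : Fintype ↥C := Fintype.ofFinite _
  set Δ : ℕ := 2 ^ (k - 2) with hΔdef
  have hΔpos : 0 < Δ := pow_pos (by norm_num) _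
  have h2Δ : 2 * Δ = 2 ^ (k - 1) := by
    rw [hΔdef, ← pow_succ']
    congr 1
    omega
  have hcard : Fintype.card ↥C = 2 ^ k := by
    have h := Module.card_eq_pow_finrank (K := ZMod 2) (V := ↥C)
    rwa [ZMod.card, hrank] at h
  set supp : (Fin n → ZMod 2) → Finset (Fin n) :=
    fun c => Finset.univ.filter (fun i => c i ≠ 0) with hsupp
  have hwt : ∀ c : Fin n → ZMod 2, wt c = (supp c).card := fun c => wt_eq_card c
  have hsupp_zero : ∀ c : Fin n → ZMod 2, supp c = ∅ → c = 0 := by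
    intro c h
    funext i
    simp only [Pi.zero_apply]
    by_contra hi
    have hmem : i ∈ supp c := by simp [hsupp, hi]
    rw [h] at hmem
    exact absurd hmem (Finset.notMem_empty i)
  have hsupp_eq : ∀ c u : Fin n → ZMod 2, supp c = supp u → c = u := by
    intro c u h
    funext i
    have hiff := Finset.ext_iff.mp h i
    simp only [hsupp, Finset.mem_filter, Finset.mem_univ, true_and] at hiff
    rcases zmod2_cases (c i) with h1 | h1 <;> rcases zmod2_cases (u i) with h2 | h2 <;>
      simp_all
  have hset : ∀ c : Fin n → ZMod 2, {i | c i ≠ 0} = ↑(supp c) := by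
    intro c; ext i; simp [hsupp]
  have hmin' : ∀ c ∈ C, c ≠ 0 → ∀ u ∈ C, u ≠ 0 → supp u ⊆ supp c → supp u = supp c := by
    intro c hc hc0 u hu hu0 hsub
    have h := hmin c hc hc0 u hu hu0 (by rw [hset, hset]; exact Finset.coe_subset.mpr hsub)
    rw [hset, hset] at h
    exact Finset.coe_inj.mp h
  have hadd_supp : ∀ c u : Fin n → ZMod 2, supp (c + u) = symmDiff (supp c) (supp u) := by
    intro c u
    ext i
    simp only [hsupp, Finset.mem_filter, Finset.mem_univ, true_and, Finset.mem_symmDiff,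
      Pi.add_apply]
    rcases zmod2_cases (c i) with h1 | h1 <;> rcases zmod2_cases (u i) with h2 | h2 <;>
      rw [h1, h2] <;> simp <;> decide
  have hcard_symmdiff : ∀ A B : Finset (Fin n),
      (symmDiff A B).card + 2 * (A ∩ B).card = A.card + B.card := by
    intro A B
    have h1 : (A ∪ B).card + (A ∩ B).card = A.card + B.card :=
      Finset.card_union_add_card_inter A B
    have h2 : symmDiff A B = (A ∪ B) \ (A ∩ B) := by
      rw [symmDiff_eq_sup_sdiff_inf]
      rfl
    have h3 : (A ∩ B) ⊆ (A ∪ B) := Finset.inter_subset_union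
    have h4 : ((A ∪ B) \ (A ∩ B)).card = (A ∪ B).card - (A ∩ B).card :=
      Finset.card_sdiff_of_subset h3
    have h5 : (A ∩ B).card ≤ (A ∪ B).card := Finset.card_le_card h3
    rw [h2, h4]
    omega
  set T : ℕ := ∑ c : ↥C, wt (c : Fin n → ZMod 2) with hT
  have hcol : ∀ i : Fin n,
      (Finset.univ.filter (fun c : ↥C => (c : Fin n → ZMod 2) i ≠ 0)).card = 0 ∨
      2 * (Finset.univ.filter (fun c : ↥C => (c : Fin n → ZMod 2) i ≠ 0)).card = 2 ^ k := by
    intro i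
    by_cases h : ∀ c : ↥C, (c : Fin n → ZMod 2) i = 0
    · left
      rw [Finset.card_eq_zero]
      ext c
      simp [h c]
    · right
      push_neg at h
      have hh := half_card (fun c : ↥C => (c : Fin n → ZMod 2) i)
        (by intro a b; rfl) h
      rwa [hcard] at hh
  have hTcol : T = ∑ i : Fin n,
      (Finset.univ.filter (fun c : ↥C => (c : Fin n → ZMod 2) i ≠ 0)).card := by
    rw [hT]
    have hterm : ∀ c : ↥C, wt (c : Fin n → ZMod 2)
        = ∑ i : Fin n, if (c : Fin n → ZMod 2) i ≠ 0 then 1 else 0 := by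
      intro c
      rw [hwt, hsupp]
      exact Finset.card_filter _ _
    rw [Finset.sum_congr rfl (fun c _ => hterm c), Finset.sum_comm]
    exact Finset.sum_congr rfl fun i _ => (Finset.card_filter _ _).symm
  have hpowk : 2 ^ k = 2 * 2 ^ (k - 1) := by
    rw [← pow_succ']
    congr 1
    omega
  have hTle : T ≤ n * 2 ^ (k - 1) := by
    rw [hTcol]
    calc ∑ i : Fin n, (Finset.univ.filter
          (fun c : ↥C => (c : Fin n → ZMod 2) i ≠ 0)).card
        ≤ ∑ _i : Fin n, 2 ^ (k - 1) := by
          apply Finset.sum_le_sum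
          intro i _
          rcases hcol i with h | h <;> omega
      _ = n * 2 ^ (k - 1) := by
          rw [Finset.sum_const, Finset.card_univ, Fintype.card_fin, smul_eq_mul]
  have hTdvd : 2 ^ (k - 1) ∣ T := by
    rw [hTcol]
    apply Finset.dvd_sum
    intro i _
    rcases hcol i with h | h
    · rw [h]
      exact dvd_zero _
    · exact ⟨1, by omega⟩
  set m : ↥C → ℕ := fun c => wt (c : Fin n → ZMod 2) / Δ with hm
  have hmwt : ∀ c : ↥C, wt (c : Fin n → ZMod 2) = Δ * m c := by
    intro c
    exact (Nat.mul_div_cancel' (hdiv c.1 c.2)).symm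
  have hTm : T = Δ * ∑ c : ↥C, m c := by
    rw [hT, Finset.mul_sum]
    exact Finset.sum_congr rfl fun c _ => hmwt c
  have hparity : ((∑ c : ↥C, m c : ℕ) : ZMod 2) = 0 := by
    have h2 : 2 ∣ ∑ c : ↥C, m c := by
      rw [hTm, ← h2Δ] at hTdvd
      obtain ⟨t, ht⟩ := hTdvd
      refine ⟨t, Nat.eq_of_mul_eq_mul_left hΔpos ?_⟩
      rw [ht]
      ring
    exact (ZMod.natCast_eq_zero_iff _ 2).mpr h2
  have hwt0 : wt (0 : Fin n → ZMod 2) = 0 := by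
    rw [wt_eq_card]
    simp
  -- no codeword of weight exactly Δ
  have hnoΔ : ∀ c : ↥C, wt (c : Fin n → ZMod 2) ≠ Δ := by
    intro c₀ hc₀
    have hc₀0 : (c₀ : Fin n → ZMod 2) ≠ 0 := by
      intro h
      rw [h, hwt0] at hc₀
      omega
    have hc₀ne : c₀ ≠ 0 := by
      intro h
      apply hc₀0
      rw [h]
      rfl
    have hneg : ∀ v : Fin n → ZMod 2, -v = v := by
      intro v
      funext i
      have : ∀ a : ZMod 2, -a = a := by decide
      exact this (v i)
    have hpair : ∀ u : ↥C, u ≠ 0 → u ≠ c₀ →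
        wt ((u : Fin n → ZMod 2) + (c₀ : Fin n → ZMod 2)) = wt (u : Fin n → ZMod 2) := by
      intro u hu0 huc
      have hu0' : (u : Fin n → ZMod 2) ≠ 0 := by
        intro h
        exact hu0 (by exact Subtype.ext h)
      set A := supp (u : Fin n → ZMod 2) with hA
      set B := supp (c₀ : Fin n → ZMod 2) with hBdef
      have hBcard : B.card = Δ := by rw [← hwt]; exact hc₀
      have hsd : supp ((u : Fin n → ZMod 2) + (c₀ : Fin n → ZMod 2)) = symmDiff A B :=
        hadd_supp _ _
      have hkey : (symmDiff A B).card + 2 * (A ∩ B).card = A.card + B.card := hcard_symmdiff A B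
      have hmem : ((u : Fin n → ZMod 2) + (c₀ : Fin n → ZMod 2)) ∈ C := C.add_mem u.2 c₀.2
      have hne0 : (u : Fin n → ZMod 2) + (c₀ : Fin n → ZMod 2) ≠ 0 := by
        intro h
        apply huc
        apply Subtype.ext
        have := eq_neg_of_add_eq_zero_left h
        rwa [hneg] at this
      obtain ⟨p, hp⟩ := hdiv _ hmem
      obtain ⟨q, hq⟩ := hdiv _ u.2
      rw [hwt, hsd] at hp
      rw [hwt, ← hA] at hq
      have hdvd2a : Δ ∣ 2 * (A ∩ B).card := by
        have h2a : 2 * (A ∩ B).card = Δ * (q + 1) - Δ * p := by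
          have : Δ * (q + 1) = Δ * q + Δ := by ring
          omega
        rw [h2a]
        exact Nat.dvd_sub (Dvd.intro _ rfl) (Dvd.intro _ rfl)
      have h2a_le : 2 * (A ∩ B).card ≤ 2 * Δ := by
        have := Finset.card_le_card (Finset.inter_subset_right : A ∩ B ⊆ B)
        omega
      obtain ⟨r, hr⟩ := hdvd2a
      have hr2 : r ≤ 2 := by
        by_contra hr3
        push_neg at hr3
        have : Δ * 3 ≤ Δ * r := Nat.mul_le_mul_left Δ hr3
        omega
      interval_cases r
      · -- intersection empty : contradiction with minimality
        exfalso
        have hab : (A ∩ B) = ∅ := by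
          rw [← Finset.card_eq_zero]
          omega
        have hBsub : B ⊆ symmDiff A B := by
          intro i hi
          rw [Finset.mem_symmDiff]
          right
          refine ⟨hi, fun hiA => ?_⟩
          have : i ∈ A ∩ B := Finset.mem_inter.mpr ⟨hiA, hi⟩
          rw [hab] at this
          exact absurd this (Finset.notMem_empty i)
        have heq := hmin' _ hmem hne0 _ c₀.2 hc₀0 (by rw [hsd]; exact hBsub)
        rw [hsd] at heq
        -- B = symmDiff A B forces A = ∅
        have hAempty : A = ∅ := by
          ext i
          simp only [Finset.notMem_empty, iff_false]
          intro hiA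
          have hiAB : i ∉ A ∩ B := by rw [hab]; exact Finset.notMem_empty i
          have hiB : i ∉ B := fun hiB => hiAB (Finset.mem_inter.mpr ⟨hiA, hiB⟩)
          have : i ∈ symmDiff A B := Finset.mem_symmDiff.mpr (Or.inl ⟨hiA, hiB⟩)
          rw [← heq] at this
          exact hiB this
        exact hu0' (hsupp_zero _ hAempty)
      · -- 2|A∩B| = Δ : weights equal
        rw [hwt, hsd, hwt, ← hA]
        omega
      · -- B ⊆ A : contradiction with minimality
        exfalso
        have hBA : B ⊆ A := by
          have hsubBA : A ∩ B ⊆ B := Finset.inter_subset_right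
          have hcardle : B.card ≤ (A ∩ B).card := by omega
          have := Finset.eq_of_subset_of_card_le hsubBA hcardle
          rw [← this]
          exact Finset.inter_subset_left
        have heq := hmin' _ u.2 hu0' _ c₀.2 hc₀0 hBA
        exact huc (Subtype.ext (hsupp_eq _ _ heq.symm))
    have hm0 : m (0 : ↥C) = 0 := by
      rw [hm]
      simp only
      rw [show ((0 : ↥C) : Fin n → ZMod 2) = 0 from rfl, hwt0]
      exact Nat.zero_div Δ
    have hmc₀ : m c₀ = 1 := by
      rw [hm]
      simp only
      rw [hc₀]
      exact Nat.div_self hΔpos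
    set S : Finset ↥C := Finset.univ \ {0, c₀} with hS
    have hsum0 : ∑ u ∈ S, ((m u : ℕ) : ZMod 2) = 0 := by
      apply Finset.sum_involution (g := fun u _ => u + c₀)
      · intro a ha
        have haS : a ≠ 0 ∧ a ≠ c₀ := by
          rw [hS] at ha
          simp only [Finset.mem_sdiff, Finset.mem_univ, true_and, Finset.mem_insert,
            Finset.mem_singleton, not_or] at ha
          exact ha
        have hwteq : wt ((a + c₀ : ↥C) : Fin n → ZMod 2) = wt ((a : ↥C) : Fin n → ZMod 2) := by
          rw [show ((a + c₀ : ↥C) : Fin n → ZMod 2)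
            = (a : Fin n → ZMod 2) + (c₀ : Fin n → ZMod 2) from rfl]
          exact hpair a haS.1 haS.2
        have hmeq : m (a + c₀) = m a := by
          rw [hm]
          simp only
          rw [hwteq]
        rw [hmeq]
        have : ∀ b : ZMod 2, b + b = 0 := by decide
        exact this _
      · intro a _ _
        intro h
        have : c₀ = 0 := by
          have := add_eq_left.mp h
          exact this
        exact hc₀ne this
      · intro a ha
        rw [hS] at ha ⊢
        simp only [Finset.mem_sdiff, Finset.mem_univ, true_and, Finset.mem_insert,
          Finset.mem_singleton, not_or] at ha ⊢
        constructor
        · intro h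
          apply ha.2
          have := eq_neg_of_add_eq_zero_left h
          rw [show -c₀ = c₀ from Subtype.ext (hneg (c₀ : Fin n → ZMod 2))] at this
          exact this
        · intro h
          exact ha.1 (add_eq_right.mp h)
      · intro a ha
        rw [add_assoc]
        have hcc : c₀ + c₀ = 0 := by
          apply Subtype.ext
          rw [show ((c₀ + c₀ : ↥C) : Fin n → ZMod 2)
            = (c₀ : Fin n → ZMod 2) + (c₀ : Fin n → ZMod 2) from rfl]
          rw [show ((0 : ↥C) : Fin n → ZMod 2) = 0 from rfl]
          funext i
          have : ∀ b : ZMod 2, b + b = 0 := by decide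
          exact this _
        rw [hcc, add_zero]
    have hsplit : (∑ c : ↥C, ((m c : ℕ) : ZMod 2))
        = ∑ u ∈ S, ((m u : ℕ) : ZMod 2) + ∑ u ∈ ({0, c₀} : Finset ↥C), ((m u : ℕ) : ZMod 2) := by
      rw [hS]
      exact (Finset.sum_sdiff (Finset.subset_univ _)).symm
    have h0nec₀ : (0 : ↥C) ≠ c₀ := fun h => hc₀ne h.symm
    have hpairsum : ∑ u ∈ ({0, c₀} : Finset ↥C), ((m u : ℕ) : ZMod 2) = 1 := by
      rw [Finset.sum_pair h0nec₀, hm0, hmc₀]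
      decide
    have hcast : ((∑ c : ↥C, m c : ℕ) : ZMod 2) = ∑ c : ↥C, ((m c : ℕ) : ZMod 2) :=
      Nat.cast_sum _ _
    rw [hcast, hsplit, hsum0, hpairsum, zero_add] at hparity
    exact one_ne_zero hparity
  -- every nonzero codeword has weight at least 2^(k-1)
  have hge : ∀ c : ↥C, c ≠ 0 → 2 ^ (k - 1) ≤ wt (c : Fin n → ZMod 2) := by
    intro c hc
    have hne0 : wt (c : Fin n → ZMod 2) ≠ 0 := by
      rw [hwt]
      intro h
      apply hc
      exact Subtype.ext (hsupp_zero _ (Finset.card_eq_zero.mp h))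
    have hneΔ := hnoΔ c
    obtain ⟨t, ht⟩ := hdiv _ c.2
    have ht2 : 2 ≤ t := by
      rcases t with _ | t
      · omega
      · rcases t with _ | t
        · omega
        · omega
    have : Δ * 2 ≤ Δ * t := Nat.mul_le_mul_left Δ ht2
    omega
  have hTge : (2 ^ k - 1) * 2 ^ (k - 1) ≤ T := by
    rw [hT]
    have hfilter : Finset.univ.filter (fun c : ↥C => c ≠ 0) = Finset.univ \ {0} := by
      ext c
      simp
    have hfc : (Finset.univ.filter (fun c : ↥C => c ≠ 0)).card = 2 ^ k - 1 := by
      rw [hfilter, Finset.card_sdiff_of_subset (by simp), Finset.card_singleton, Finset.card_univ, hcard]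
    calc (2 ^ k - 1) * 2 ^ (k - 1)
        = ∑ _c ∈ Finset.univ.filter (fun c : ↥C => c ≠ 0), 2 ^ (k - 1) := by
          rw [Finset.sum_const, hfc, smul_eq_mul]
      _ ≤ ∑ c ∈ Finset.univ.filter (fun c : ↥C => c ≠ 0), wt (c : Fin n → ZMod 2) := by
          apply Finset.sum_le_sum
          intro c hc
          exact hge c (by simpa using hc)
      _ ≤ ∑ c : ↥C, wt (c : Fin n → ZMod 2) :=
          Finset.sum_le_sum_of_subset (Finset.filter_subset _ _)
  have hfinal : (2 ^ k - 1) * 2 ^ (k - 1) ≤ n * 2 ^ (k - 1) := le_trans hTge hTle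
  exact Nat.le_of_mul_le_mul_right hfinal (pow_pos (by norm_num) _)

/-- For every integer `k ≥ 2` we have `m(k,2;2^(k-2)) = 2^k - 1`, attained by the binary
simplex code of dimension `k`. -/
theorem mDiv_binary_simplex (k : ℕ) (hk : 2 ≤ k) :
    mDiv (ZMod 2) k (2 ^ (k - 2)) = 2 ^ k - 1 ∧
    ∃ C : Submodule (ZMod 2) (Fin (2 ^ k - 1) → ZMod 2),
      Module.finrank (ZMod 2) C = k ∧ IsMinimalCode C ∧
      ∀ c ∈ C, 2 ^ (k - 2) ∣ wt c := by
  obtain ⟨C, h1, h2, h3⟩ := simplex_exists k hk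
  have hmem : (2 ^ k - 1) ∈ {n : ℕ | ∃ C : Submodule (ZMod 2) (Fin n → ZMod 2),
      Module.finrank (ZMod 2) C = k ∧ IsMinimalCode C ∧ ∀ c ∈ C, 2 ^ (k - 2) ∣ wt c} :=
    ⟨C, h1, h2, h3⟩
  refine ⟨le_antisymm (Nat.sInf_le hmem) ?_, C, h1, h2, h3⟩
  apply le_csInf ⟨2 ^ k - 1, hmem⟩
  rintro n ⟨D, hD1, hD2, hD3⟩
  exact lower_bound hk D hD1 hD2 hD3
end

section
/- Let C be a linear [n,k]_2 code, and embed its codewords into ℝ^n by reading coordinates of F_2 as the real numbers 0 and 1. Then the set of codewords of C is an acute set in ℝ^n (i.e., for all pairwise distinct codewords a, b, c, the angle at b in the triple (a,b,c) is strictly less than π/2, equivalently the real inner product ⟨a-b, c-b⟩ is strictly positive) if and only if C is a minimal code. -/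
/-- The embedding of a binary word into `ℝ^n`, reading the coordinates of `F_2` as the
real numbers `0` and `1`. -/
noncomputable def toReal {n : ℕ} (c : Fin n → ZMod 2) : Fin n → ℝ :=
  fun i => ((c i).val : ℝ)

lemma zmod2_cases_s15 (x : ZMod 2) : x = 0 ∨ x = 1 := by
  have h : ∀ y : ZMod 2, y = 0 ∨ y = 1 := by decide
  exact h x

lemma zmod2_ne_zero {x : ZMod 2} (h : x ≠ 0) : x = 1 := by
  rcases zmod2_cases_s15 x with h0 | h1
  · exact absurd h0 h
  · exact h1

lemma term_nonneg (x y z : ZMod 2) :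
    0 ≤ ((x.val : ℝ) - y.val) * ((z.val : ℝ) - y.val) := by
  rcases zmod2_cases_s15 x with hx | hx <;> rcases zmod2_cases_s15 y with hy | hy <;>
    rcases zmod2_cases_s15 z with hz | hz <;> subst hx <;> subst hy <;> subst hz <;>
    norm_num [ZMod.val_zero, ZMod.val_one]

lemma term_pos_iff (x y z : ZMod 2) :
    0 < ((x.val : ℝ) - y.val) * ((z.val : ℝ) - y.val) ↔ (x ≠ y ∧ z ≠ y) := by
  rcases zmod2_cases_s15 x with hx | hx <;> rcases zmod2_cases_s15 y with hy | hy <;>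
    rcases zmod2_cases_s15 z with hz | hz <;> subst hx <;> subst hy <;> subst hz <;>
    norm_num [ZMod.val_zero, ZMod.val_one]

lemma sum_pos_iff {n : ℕ} (a b c : Fin n → ZMod 2) :
    0 < ∑ i : Fin n, (toReal a i - toReal b i) * (toReal c i - toReal b i) ↔
      ∃ i, a i ≠ b i ∧ c i ≠ b i := by
  constructor
  · intro h
    by_contra hc
    push_neg at hc
    have hle : ∑ i : Fin n, (toReal a i - toReal b i) * (toReal c i - toReal b i) ≤ 0 := by
      apply Finset.sum_nonpos
      intro i _
      have hnp : ¬ (0 < (toReal a i - toReal b i) * (toReal c i - toReal b i)) := by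
        rw [toReal, toReal, toReal, term_pos_iff]
        rintro ⟨h1, h2⟩
        exact h2 (hc i h1)
      exact le_of_not_gt hnp
    linarith
  · rintro ⟨i, h1, h2⟩
    apply Finset.sum_pos'
    · intro j _; exact term_nonneg _ _ _
    · exact ⟨i, Finset.mem_univ i, (term_pos_iff _ _ _).mpr ⟨h1, h2⟩⟩

/-- Let `C` be a linear `[n,k]_2` code, embedded into `ℝ^n` by reading coordinates of
`F_2` as the real numbers `0` and `1`. Then the set of codewords of `C` is an acute set
in `ℝ^n` (for all pairwise distinct codewords `a`, `b`, `c` the angle at `b` is strictly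
acute, i.e. the real inner product `⟨a-b, c-b⟩` is strictly positive) if and only if `C`
is a minimal code. -/
theorem acute_iff_minimal
    (n k : ℕ) (C : Submodule (ZMod 2) (Fin n → ZMod 2))
    (hk : Module.finrank (ZMod 2) C = k) :
    (∀ a ∈ C, ∀ b ∈ C, ∀ c ∈ C, a ≠ b → b ≠ c → a ≠ c →
      0 < ∑ i : Fin n, (toReal a i - toReal b i) * (toReal c i - toReal b i)) ↔
    IsMinimalCode C := by
  constructor
  · -- acute → minimal
    intro hacute c0 hc0 hc0ne u hu hune hsub
    by_contra hne
    have hstrict : ∃ i, c0 i ≠ 0 ∧ u i = 0 := by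
      by_contra h
      push_neg at h
      exact hne (Set.Subset.antisymm hsub (fun i hi => h i hi))
    obtain ⟨i0, hc0i, hui0⟩ := hstrict
    set v : Fin n → ZMod 2 := c0 - u with hv_def
    have hv : v ∈ C := sub_mem hc0 hu
    have hvi0 : v i0 = c0 i0 := by simp [hv_def, hui0]
    have hvne : v ≠ 0 := by
      intro h
      rw [h] at hvi0
      exact hc0i (hvi0.symm)
    have hdisj : ∀ i, u i ≠ 0 → v i = 0 := by
      intro i hi
      have h1 : u i = 1 := zmod2_ne_zero hi
      have h2 : c0 i = 1 := zmod2_ne_zero (hsub hi)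
      simp [hv_def, h1, h2]
    have huv : u ≠ v := by
      intro h
      rw [← h] at hvi0
      exact hc0i (hui0 ▸ hvi0.symm)
    have hpos := hacute u hu 0 (zero_mem C) v hv hune (Ne.symm hvne) huv
    rw [sum_pos_iff] at hpos
    obtain ⟨i, h1, h2⟩ := hpos
    simp only [Pi.zero_apply] at h1 h2
    exact h2 (hdisj i h1)
  · -- minimal → acute
    intro hmin a ha b hb c hc hab hbc hac
    rw [sum_pos_iff]
    by_contra h
    push_neg at h
    set u : Fin n → ZMod 2 := a - b with hu_def
    set v : Fin n → ZMod 2 := c - b with hv_def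
    have hu : u ∈ C := sub_mem ha hb
    have hv : v ∈ C := sub_mem hc hb
    have hune : u ≠ 0 := sub_ne_zero.mpr hab
    have hvne : v ≠ 0 := sub_ne_zero.mpr (Ne.symm hbc)
    have hdisj : ∀ i, u i ≠ 0 → v i = 0 := by
      intro i hi
      have hai : a i ≠ b i := by
        intro e
        apply hi
        simp [hu_def, e]
      have := h i hai
      simp [hv_def, this]
    set w : Fin n → ZMod 2 := u + v with hw_def
    have hw : w ∈ C := add_mem hu hv
    have hsub : {i | u i ≠ 0} ⊆ {i | w i ≠ 0} := by
      intro i hi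
      have hvi : v i = 0 := hdisj i hi
      simp only [Set.mem_setOf_eq, hw_def, Pi.add_apply, hvi, add_zero]
      exact hi
    have hwne : w ≠ 0 := by
      obtain ⟨i, hi⟩ := Function.ne_iff.mp hune
      simp only [Pi.zero_apply] at hi
      intro hw0
      have : w i ≠ 0 := hsub hi
      rw [hw0] at this
      exact this rfl
    have heq := hmin w hw hwne u hu hune hsub
    obtain ⟨j, hj⟩ := Function.ne_iff.mp hvne
    simp only [Pi.zero_apply] at hj
    have huj : u j = 0 := by
      by_contra huj
      exact hj (hdisj j huj)
    have hwj : w j ≠ 0 := by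
      simp only [hw_def, Pi.add_apply, huj, zero_add]
      exact hj
    have : j ∈ {i | u i ≠ 0} := heq ▸ hwj
    exact this huj
end
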